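/- The quotient M / M_I of a connected adjacency matrix M by a connected principal submatrix M_I is connected; conversely, if M / M_I is connected (with M_I connected), then M is connected. -/

import Mathlib

open Matrix BigOperators
open scoped Classical

noncomputable section

/-- An adjacency matrix: symmetric with zero diagonal (entries in `ℕ`). -/
def IsAdj {ι : Type*} (M : Matrix ι ι ℕ) : Prop :=
  (∀ i j, M i j = M j i) ∧ ∀ i, M i i = 0

/-- Connectedness of the multigraph encoded by `M`. -/
def AdjConnected {ι : Type*} (M : Matrix ι ι ℕ) : Prop :=
  ∀ i j : ι, Relation.ReflTransGen (fun a b => M a b ≠ 0) i j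

/-- The principal submatrix `M_I`. -/
def restrict {ι : Type*} (M : Matrix ι ι ℕ) (I : Finset ι) :
    Matrix {x // x ∈ I} {x // x ∈ I} ℕ :=
  fun a b => M a.1 b.1

/-- The quotient `M / M_I`: the indices in `I` are collapsed to the single new
index `⊥` (denoted `1∗` in the paper, placed first), with collapsed entries
given by the column sums over `I`. -/
def quotAdj {ι : Type*} (M : Matrix ι ι ℕ) (I : Finset ι) :
    Matrix (WithBot {j : ι // j ∉ I}) (WithBot {j : ι // j ∉ I}) ℕ :=
  fun x y =>
    WithBot.recBotCoe
      (WithBot.recBotCoe 0 (fun j => ∑ a ∈ I, M a j.1) y)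
      (fun i => WithBot.recBotCoe (∑ a ∈ I, M i.1 a) (fun j => M i.1 j.1) y) x

section Aux

variable {m : ℕ} (M : Matrix (Fin m) (Fin m) ℕ) (I : Finset (Fin m))

/-- Map a vertex of `M` to the quotient. -/
def qmap (i : Fin m) : WithBot {j : Fin m // j ∉ I} :=
  if h : i ∈ I then ⊥ else ((⟨i, h⟩ : {j : Fin m // j ∉ I}) : WithBot {j : Fin m // j ∉ I})

/-- Map a quotient vertex back, sending `⊥` to a chosen `i₀ ∈ I`. -/
def umap (i₀ : Fin m) : WithBot {j : Fin m // j ∉ I} → Fin m :=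
  WithBot.recBotCoe i₀ Subtype.val

lemma pathI (hIc : AdjConnected (restrict M I)) {a b : Fin m} (ha : a ∈ I) (hb : b ∈ I) :
    Relation.ReflTransGen (fun x y => M x y ≠ 0) a b :=
  Relation.ReflTransGen.lift (p := fun x y => M x y ≠ 0) Subtype.val (fun _ _ h => h)
    ⟨a, ha⟩ ⟨b, hb⟩ (hIc ⟨a, ha⟩ ⟨b, hb⟩)

lemma step_push {a b : Fin m} (hab : M a b ≠ 0) :
    Relation.ReflTransGen (fun x y => quotAdj M I x y ≠ 0) (qmap I a) (qmap I b) := by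
  unfold qmap
  by_cases ha : a ∈ I <;> by_cases hb : b ∈ I <;> simp only [ha, hb, dif_pos, dif_neg,
    not_false_iff]
  · exact Relation.ReflTransGen.refl
  · refine Relation.ReflTransGen.single ?_
    show (∑ x ∈ I, M x b) ≠ 0
    intro h
    exact hab (Finset.sum_eq_zero_iff.mp h a ha)
  · refine Relation.ReflTransGen.single ?_
    show (∑ x ∈ I, M a x) ≠ 0
    intro h
    exact hab (Finset.sum_eq_zero_iff.mp h b hb)
  · exact Relation.ReflTransGen.single hab

lemma step_pull (hIc : AdjConnected (restrict M I)) {i₀ : Fin m} (hi₀ : i₀ ∈ I)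
    {x y : WithBot {j : Fin m // j ∉ I}} (h : quotAdj M I x y ≠ 0) :
    Relation.ReflTransGen (fun a b => M a b ≠ 0) (umap I i₀ x) (umap I i₀ y) := by
  induction x using WithBot.recBotCoe with
  | bot =>
    induction y using WithBot.recBotCoe with
    | bot => exact absurd rfl h
    | coe j =>
      obtain ⟨a, ha, hav⟩ := Finset.exists_ne_zero_of_sum_ne_zero h
      exact (pathI M I hIc hi₀ ha).trans (Relation.ReflTransGen.single hav)
  | coe i =>
    induction y using WithBot.recBotCoe with
    | bot =>
      obtain ⟨a, ha, hav⟩ := Finset.exists_ne_zero_of_sum_ne_zero h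
      exact (Relation.ReflTransGen.single (r := fun a b => M a b ≠ 0) hav).trans
        (pathI M I hIc ha hi₀)
    | coe j => exact Relation.ReflTransGen.single h

end Aux

/-- With `M_I` connected, the quotient `M / M_I` is connected iff `M` is. -/
theorem quotAdj_connected_iff (m : ℕ) (M : Matrix (Fin m) (Fin m) ℕ) (hM : IsAdj M)
    (I : Finset (Fin m)) (hI : 2 ≤ I.card) (hIc : AdjConnected (restrict M I)) :
    AdjConnected (quotAdj M I) ↔ AdjConnected M := by
  obtain ⟨i₀, hi₀⟩ : I.Nonempty := Finset.card_pos.mp (by omega)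
  constructor
  · intro hQ i j
    have lift : ∀ x y, Relation.ReflTransGen (fun a b => quotAdj M I a b ≠ 0) x y →
        Relation.ReflTransGen (fun a b => M a b ≠ 0) (umap I i₀ x) (umap I i₀ y) := by
      intro x y hxy
      induction hxy with
      | refl => exact Relation.ReflTransGen.refl
      | tail _ hstep ih => exact ih.trans (step_pull M I hIc hi₀ hstep)
    have key : ∀ i : Fin m, Relation.ReflTransGen (fun a b => M a b ≠ 0) i (umap I i₀ (qmap I i))
        ∧ Relation.ReflTransGen (fun a b => M a b ≠ 0) (umap I i₀ (qmap I i)) i := by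
      intro i
      unfold qmap
      by_cases hi : i ∈ I
      · simp only [hi, dif_pos]
        exact ⟨pathI M I hIc hi hi₀, pathI M I hIc hi₀ hi⟩
      · simp only [hi, dif_neg, not_false_iff]
        exact ⟨Relation.ReflTransGen.refl, Relation.ReflTransGen.refl⟩
    exact ((key i).1.trans (lift _ _ (hQ (qmap I i) (qmap I j)))).trans (key j).2
  · intro hMc x y
    have lift : ∀ a b : Fin m, Relation.ReflTransGen (fun a b => M a b ≠ 0) a b →
        Relation.ReflTransGen (fun a b => quotAdj M I a b ≠ 0) (qmap I a) (qmap I b) := by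
      intro a b hab
      induction hab with
      | refl => exact Relation.ReflTransGen.refl
      | tail _ hstep ih => exact ih.trans (step_push M I hstep)
    have hfg : ∀ x : WithBot {j : Fin m // j ∉ I}, qmap I (umap I i₀ x) = x := by
      intro x
      induction x using WithBot.recBotCoe with
      | bot => simp [umap, qmap, hi₀]
      | coe j => simp [umap, qmap, j.2]
    have := lift _ _ (hMc (umap I i₀ x) (umap I i₀ y))
    rwa [hfg, hfg] at this

end
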